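/- Let f : [0,∞) → ℝ be locally integrable and suppose that for every θ ∈ (0,1] there exists L(θ) ∈ ℝ such that (1/t)∫₀ᵗ ∫ₛ^{s+θ} f(u) du ds → L(θ) as t → ∞. Then for any fixed θ ∈ (0,1], the supremum over all t ∈ [1,∞) and T ∈ [0,θ] of |(1/t)∫₀ᵗ ∫ₛ^{s+T} f(u) du ds − L(T)| is finite. -/
import Mathlib

open MeasureTheory Filter Set
open scoped Topology
set_option maxHeartbeats 1600000

/-- If for every `θ ∈ (0,1]` the Cesàro mean of `t ↦ ∫_t^{t+θ} f` converges to `L θ`,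
then for fixed `θ ∈ (0,1]` the quantity `|(1/t)∫₀ᵗ∫_s^{s+T} f - L T|` is uniformly
bounded over `t ∈ [1,∞)` and `T ∈ [0,θ]`. -/
theorem stmt2 (f : ℝ → ℝ) (hf : LocallyIntegrableOn f (Set.Ici 0))
    (L : ℝ → ℝ) (hL0 : L 0 = 0)
    (hconv : ∀ θ ∈ Set.Ioc (0:ℝ) 1,
      Tendsto (fun t => (1/t) * ∫ s in (0:ℝ)..t, ∫ u in s..(s+θ), f u) atTop (𝓝 (L θ)))
    (θ : ℝ) (hθ : θ ∈ Set.Ioc (0:ℝ) 1) :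
    ∃ C : ℝ, ∀ t ≥ (1:ℝ), ∀ T ∈ Set.Icc (0:ℝ) θ,
      |(1/t) * (∫ s in (0:ℝ)..t, ∫ u in s..(s+T), f u) - L T| ≤ C := by
  classical
  set g : ℝ → ℝ := (Set.Ici (0:ℝ)).indicator f with hg_def
  have hgi : ∀ a b : ℝ, IntervalIntegrable g volume a b := by
    intro a b
    rw [intervalIntegrable_iff]
    have : IntegrableOn g (Set.uIcc a b) volume := by
      rw [hg_def, IntegrableOn, integrable_indicator_iff measurableSet_Ici,
        IntegrableOn, Measure.restrict_restrict measurableSet_Ici]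
      have hsub : Set.Ici (0:ℝ) ∩ Set.uIcc a b ⊆ Set.Icc 0 (max a b) := by
        rintro x ⟨hx0, hx⟩
        exact ⟨hx0, hx.2⟩
      exact (hf.integrableOn_compact_subset
        (Set.Icc_subset_Ici_self) isCompact_Icc).mono_set hsub
    exact this.mono_set Set.uIoc_subset_uIcc
  set F : ℝ → ℝ := fun x => ∫ u in (0:ℝ)..x, g u with hF_def
  have hF : Continuous F := intervalIntegral.continuous_primitive hgi 0
  set H : ℝ → ℝ := fun x => ∫ u in (0:ℝ)..x, F u with hH_def
  have hH : Continuous H := intervalIntegral.continuous_primitive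
    (fun a b => hF.intervalIntegrable a b) 0
  -- inner integral identity
  have inner_eq : ∀ s : ℝ, 0 ≤ s → ∀ T : ℝ, 0 ≤ T →
      (∫ u in s..(s+T), f u) = F (s+T) - F s := by
    intro s hs T hT
    have h1 : (∫ u in s..(s+T), f u) = ∫ u in s..(s+T), g u := by
      apply intervalIntegral.integral_congr
      intro u hu
      rw [Set.uIcc_of_le (by linarith)] at hu
      have : (0:ℝ) ≤ u := le_trans hs hu.1
      simp [hg_def, Set.indicator_of_mem, this]
    rw [h1, hF_def]
    rw [← intervalIntegral.integral_interval_sub_left (hgi 0 (s+T)) (hgi 0 s)]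
  -- key identity
  have key : ∀ t : ℝ, 0 ≤ t → ∀ T : ℝ, 0 ≤ T →
      (∫ s in (0:ℝ)..t, ∫ u in s..(s+T), f u) = H (t+T) - H T - H t := by
    intro t ht T hT
    have h1 : (∫ s in (0:ℝ)..t, ∫ u in s..(s+T), f u)
        = ∫ s in (0:ℝ)..t, (F (s+T) - F s) := by
      apply intervalIntegral.integral_congr
      intro s hs
      rw [Set.uIcc_of_le ht] at hs
      exact inner_eq s hs.1 T hT
    rw [h1]
    have hi1 : IntervalIntegrable (fun s => F (s+T)) volume 0 t :=
      (hF.comp (continuous_add_right T)).intervalIntegrable 0 t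
    rw [intervalIntegral.integral_sub hi1 (hF.intervalIntegrable 0 t)]
    have h2 : (∫ s in (0:ℝ)..t, F (s+T)) = ∫ u in T..(t+T), F u := by
      rw [intervalIntegral.integral_comp_add_right (fun u => F u) T, zero_add]
    rw [h2]
    have h3 : (∫ u in T..(t+T), F u) = H (t+T) - H T := by
      rw [hH_def]
      rw [← intervalIntegral.integral_interval_sub_left
        (hF.intervalIntegrable 0 (t+T)) (hF.intervalIntegrable 0 T)]
    rw [h3]
  -- reformulated convergence
  have htend : ∀ T : ℝ, 0 < T → T ≤ θ →
      Tendsto (fun t => (1/t) * (H (t+T) - H T - H t)) atTop (𝓝 (L T)) := by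
    intro T hT0 hTθ
    apply (hconv T ⟨hT0, hTθ.trans hθ.2⟩).congr'
    filter_upwards [eventually_ge_atTop (0:ℝ)] with t ht
    rw [key t ht T hT0.le]
  -- pointwise boundedness
  have hbdd : ∀ T ∈ Set.Icc (0:ℝ) θ, ∃ M : ℝ, ∀ t ≥ (1:ℝ), |H (t+T) - H t| ≤ M * t := by
    rintro T ⟨hT0, hTθ⟩
    rcases eq_or_lt_of_le hT0 with rfl | hT0'
    · exact ⟨0, fun t ht => by simp⟩
    · have h2 : Tendsto (fun t => (1/t) * (H (t+T) - H t)) atTop (𝓝 (L T)) := by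
        have hz : Tendsto (fun t : ℝ => (1/t) * H T) atTop (𝓝 0) := by
          simpa using (tendsto_inv_atTop_zero.mul_const (H T))
        have := (htend T hT0' hTθ).add hz
        rw [add_zero] at this
        apply this.congr
        intro t
        ring
      rw [Metric.tendsto_atTop] at h2
      obtain ⟨N, hN⟩ := h2 1 one_pos
      set t₁ : ℝ := max N 1 with ht₁_def
      obtain ⟨M₂, hM₂⟩ := (isCompact_Icc (a := (1:ℝ)) (b := t₁)).exists_bound_of_continuousOn
        (((hH.comp (continuous_add_right T)).sub hH).continuousOn)
      have hM₂0 : 0 ≤ M₂ := le_trans (norm_nonneg _) (hM₂ 1 ⟨le_rfl, le_max_right _ _⟩)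
      refine ⟨max (|L T| + 1 + |H T|) M₂, fun t ht => ?_⟩
      have htpos : (0:ℝ) < t := lt_of_lt_of_le one_pos ht
      by_cases hcase : t₁ ≤ t
      · have hd := hN t (le_trans (le_max_left _ _) hcase)
        rw [Real.dist_eq] at hd
        have h3 : |(1/t) * (H (t+T) - H t)| ≤ |L T| + 1 := by
          calc |(1/t) * (H (t+T) - H t)|
              ≤ |(1/t) * (H (t+T) - H t) - L T| + |L T| := by
                have := abs_sub_abs_le_abs_sub ((1/t) * (H (t+T) - H t)) (L T)
                have h4 := abs_add_le ((1/t) * (H (t+T) - H t) - L T) (L T)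
                calc |(1/t) * (H (t+T) - H t)|
                    = |((1/t) * (H (t+T) - H t) - L T) + L T| := by ring_nf
                  _ ≤ _ := abs_add_le _ _
          _ ≤ |L T| + 1 := by linarith
        have h5 : |H (t+T) - H t| = t * |(1/t) * (H (t+T) - H t)| := by
          rw [abs_mul, abs_of_pos (by positivity : (0:ℝ) < 1/t)]
          field_simp
        rw [h5]
        calc t * |(1/t) * (H (t+T) - H t)| ≤ t * (|L T| + 1) := by
              exact mul_le_mul_of_nonneg_left h3 htpos.le
          _ ≤ max (|L T| + 1 + |H T|) M₂ * t := by
              have h6 : |L T| + 1 ≤ max (|L T| + 1 + |H T|) M₂ :=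
                le_trans (by simp [abs_nonneg]) (le_max_left _ _)
              nlinarith
      · push_neg at hcase
        have := hM₂ t ⟨ht, hcase.le⟩
        rw [Real.norm_eq_abs] at this
        calc |H (t+T) - H t| ≤ M₂ := this
          _ ≤ max (|L T| + 1 + |H T|) M₂ * 1 := by
              rw [mul_one]; exact le_max_right _ _
          _ ≤ max (|L T| + 1 + |H T|) M₂ * t := by
              apply mul_le_mul_of_nonneg_left ht
              exact le_trans hM₂0 (le_max_right _ _)
  -- Baire category
  haveI : CompleteSpace (Set.Icc (0:ℝ) θ) := (isClosed_Icc).completeSpace_coe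
  haveI : Nonempty (Set.Icc (0:ℝ) θ) := ⟨⟨0, le_rfl, hθ.1.le⟩⟩
  set A : ℕ → Set (Set.Icc (0:ℝ) θ) :=
    fun n => {T | ∀ t : ℝ, 1 ≤ t → |H (t + (T:ℝ)) - H t| ≤ n * t} with hA_def
  have hA_closed : ∀ n, IsClosed (A n) := by
    intro n
    have : A n = ⋂ (t : ℝ) (_ : 1 ≤ t),
        {T : Set.Icc (0:ℝ) θ | |H (t + (T:ℝ)) - H t| ≤ n * t} := by
      ext T; simp [hA_def, Set.mem_iInter]
    rw [this]
    refine isClosed_iInter fun t => isClosed_iInter fun ht => ?_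
    exact isClosed_le ((continuous_abs.comp
      ((hH.comp (continuous_const.add continuous_subtype_val)).sub continuous_const)))
      continuous_const
  have hA_cover : (⋃ n, A n) = Set.univ := by
    rw [Set.eq_univ_iff_forall]
    intro T
    obtain ⟨M, hM⟩ := hbdd T.1 T.2
    refine Set.mem_iUnion.2 ⟨⌈M⌉₊, fun t ht => ?_⟩
    calc |H (t + (T:ℝ)) - H t| ≤ M * t := hM t ht
      _ ≤ ⌈M⌉₊ * t := by
          apply mul_le_mul_of_nonneg_right (Nat.le_ceil M)
          linarith
  obtain ⟨n, hn⟩ := nonempty_interior_of_iUnion_of_closed hA_closed hA_cover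
  obtain ⟨T0, hT0⟩ := hn
  have hT0A : A n ∈ 𝓝 T0 := mem_interior_iff_mem_nhds.1 hT0
  obtain ⟨ε, hε, hball⟩ := Metric.mem_nhds_iff.1 hT0A
  have hT0mem : 0 ≤ (T0:ℝ) ∧ (T0:ℝ) ≤ θ := ⟨T0.2.1, T0.2.2⟩
  set a : ℝ := max ((T0:ℝ) - ε/2) 0 with ha_def
  set b : ℝ := min ((T0:ℝ) + ε/2) θ with hb_def
  have ha0 : 0 ≤ a := le_max_right _ _
  have hbθ : b ≤ θ := min_le_right _ _
  have ha1 : a ≤ 1 := by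
    rcases max_cases ((T0:ℝ) - ε/2) 0 with ⟨h, _⟩ | ⟨h, _⟩ <;> rw [ha_def] <;>
      [skip; skip] <;> rw [h] <;> [linarith [hT0mem.2, hθ.2]; linarith]
  have hab : a < b := by
    apply lt_min
    · apply max_lt <;> linarith [hT0mem.1]
    · apply max_lt <;> linarith [hT0mem.2, hθ.1]
  have hmem : ∀ T : ℝ, a ≤ T → T ≤ b → ∀ t : ℝ, 1 ≤ t → |H (t + T) - H t| ≤ n * t := by
    intro T h1 h2 t ht
    have hTS : T ∈ Set.Icc (0:ℝ) θ := ⟨le_trans ha0 h1, le_trans h2 hbθ⟩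
    have hTball : (⟨T, hTS⟩ : Set.Icc (0:ℝ) θ) ∈ Metric.ball T0 ε := by
      rw [Metric.mem_ball, Subtype.dist_eq, Real.dist_eq, abs_lt]
      constructor
      · have : (T0:ℝ) - ε/2 ≤ a := le_max_left _ _
        linarith
      · have : b ≤ (T0:ℝ) + ε/2 := min_le_left _ _
        linarith
    exact hball hTball t ht
  set δ : ℝ := b - a with hδ_def
  have hδ : 0 < δ := by rw [hδ_def]; linarith
  have hstar : ∀ t : ℝ, 1 ≤ t → ∀ h : ℝ, 0 ≤ h → h ≤ δ →
      |H (t + a + h) - H (t + a)| ≤ 2 * ((n:ℝ) * t) := by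
    intro t ht h hh0 hhδ
    have h1 := hmem (a + h) (by linarith) (by rw [hδ_def] at hhδ; linarith) t ht
    have h2 := hmem a le_rfl hab.le t ht
    have e1 : t + a + h = t + (a + h) := by ring
    rw [e1]
    calc |H (t + (a + h)) - H (t + a)|
        ≤ |H (t + (a + h)) - H t| + |H t - H (t + a)| := abs_sub_le _ _ _
      _ ≤ (n:ℝ) * t + (n:ℝ) * t := by
          rw [abs_sub_comm (H t)]
          exact add_le_add h1 h2
      _ = 2 * ((n:ℝ) * t) := by ring
  have hchop : ∀ k : ℕ, ∀ T : ℝ, 0 ≤ T → T ≤ 1 → T ≤ k * δ → ∀ t : ℝ, 2 ≤ t →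
      |H (t + T) - H t| ≤ k * (2 * ((n:ℝ) * (t + 1))) := by
    intro k
    induction k with
    | zero =>
      intro T hT0 _ hTk t _
      have : T = 0 := le_antisymm (by simpa using hTk) hT0
      subst this
      simp
    | succ k ih =>
      intro T hT0 hT1 hTk t ht
      have hn0 : (0:ℝ) ≤ (n:ℝ) := Nat.cast_nonneg n
      have hE0 : (0:ℝ) ≤ 2 * ((n:ℝ) * (t + 1)) := by positivity
      by_cases hc : T ≤ k * δ
      · calc |H (t + T) - H t| ≤ k * (2 * ((n:ℝ) * (t + 1))) := ih T hT0 hT1 hc t ht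
          _ ≤ (k + 1 : ℕ) * (2 * ((n:ℝ) * (t + 1))) := by
              apply mul_le_mul_of_nonneg_right _ hE0
              push_cast; linarith
      · push_neg at hc
        by_cases hTδ : T ≤ δ
        · have hs := hstar (t - a) (by linarith) T hT0 hTδ
          have e1 : t - a + a + T = t + T := by ring
          have e2 : t - a + a = t := by ring
          rw [e1, e2] at hs
          calc |H (t + T) - H t| ≤ 2 * ((n:ℝ) * (t - a)) := hs
            _ ≤ 2 * ((n:ℝ) * (t + 1)) := by nlinarith
            _ ≤ (k + 1 : ℕ) * (2 * ((n:ℝ) * (t + 1))) := by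
                push_cast
                nlinarith [Nat.cast_nonneg (α := ℝ) k]
        · push_neg at hTδ
          have hT'0 : 0 ≤ T - δ := by linarith
          have hT'k : T - δ ≤ k * δ := by
            have : T ≤ (k + 1 : ℕ) * δ := hTk
            push_cast at this
            linarith
          have hih := ih (T - δ) hT'0 (by linarith) hT'k t ht
          have hs := hstar (t + (T - δ) - a) (by linarith) δ hδ.le le_rfl
          have e1 : t + (T - δ) - a + a + δ = t + T := by ring
          have e2 : t + (T - δ) - a + a = t + (T - δ) := by ring
          rw [e1, e2] at hs
          have hs2 : |H (t + T) - H (t + (T - δ))| ≤ 2 * ((n:ℝ) * (t + 1)) := by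
            calc |H (t + T) - H (t + (T - δ))| ≤ 2 * ((n:ℝ) * (t + (T - δ) - a)) := hs
              _ ≤ 2 * ((n:ℝ) * (t + 1)) := by nlinarith
          calc |H (t + T) - H t|
              ≤ |H (t + T) - H (t + (T - δ))| + |H (t + (T - δ)) - H t| := abs_sub_le _ _ _
            _ ≤ 2 * ((n:ℝ) * (t + 1)) + k * (2 * ((n:ℝ) * (t + 1))) := add_le_add hs2 hih
            _ = (k + 1 : ℕ) * (2 * ((n:ℝ) * (t + 1))) := by push_cast; ring
  set N : ℕ := ⌈1/δ⌉₊ with hN_def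
  have hbig : ∀ t : ℝ, 2 ≤ t → ∀ T ∈ Set.Icc (0:ℝ) θ,
      |H (t + T) - H t| ≤ (4 * (n:ℝ) * (N:ℝ)) * t := by
    rintro t ht T ⟨hT0, hTθ⟩
    have hT1 : T ≤ 1 := hTθ.trans hθ.2
    have hTN : T ≤ N * δ := by
      have h1 : (1:ℝ)/δ ≤ (N:ℝ) := Nat.le_ceil _
      have h2 : (1:ℝ) ≤ (N:ℝ) * δ := by
        rw [div_le_iff₀ hδ] at h1
        linarith
      linarith
    have := hchop N T hT0 hT1 hTN t ht
    have hn0 : (0:ℝ) ≤ (n:ℝ) := Nat.cast_nonneg n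
    have hN0 : (0:ℝ) ≤ (N:ℝ) := Nat.cast_nonneg N
    calc |H (t + T) - H t| ≤ N * (2 * ((n:ℝ) * (t + 1))) := this
      _ ≤ (4 * (n:ℝ) * (N:ℝ)) * t := by
          nlinarith [mul_nonneg (mul_nonneg hn0 hN0) (by linarith : (0:ℝ) ≤ t - 1)]
  obtain ⟨B, hB⟩ := (isCompact_Icc (a := (0:ℝ)) (b := θ)).exists_bound_of_continuousOn
    hH.continuousOn
  obtain ⟨B3, hB3⟩ := (isCompact_Icc (a := (0:ℝ)) (b := 3)).exists_bound_of_continuousOn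
    hH.continuousOn
  have hB0 : 0 ≤ B := le_trans (norm_nonneg _) (hB 0 ⟨le_rfl, hθ.1.le⟩)
  have hB30 : 0 ≤ B3 := le_trans (norm_nonneg _) (hB3 0 ⟨le_rfl, by norm_num⟩)
  set K₁ : ℝ := 4 * (n:ℝ) * (N:ℝ) + 2 * B3 + B with hK₁_def
  have hK₁0 : 0 ≤ K₁ := by
    rw [hK₁_def]
    have h1 : (0:ℝ) ≤ (n:ℝ) := Nat.cast_nonneg n
    have h2 : (0:ℝ) ≤ (N:ℝ) := Nat.cast_nonneg N
    have h3 : (0:ℝ) ≤ 4 * (n:ℝ) * (N:ℝ) :=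
      mul_nonneg (mul_nonneg (by norm_num) h1) h2
    linarith
  have hG : ∀ t : ℝ, 1 ≤ t → ∀ T ∈ Set.Icc (0:ℝ) θ,
      |H (t + T) - H T - H t| ≤ K₁ * t := by
    rintro t ht T ⟨hT0, hTθ⟩
    have hBT : |H T| ≤ B := by
      have := hB T ⟨hT0, hTθ⟩; rwa [Real.norm_eq_abs] at this
    have hn0 : (0:ℝ) ≤ (n:ℝ) := Nat.cast_nonneg n
    have hN0 : (0:ℝ) ≤ (N:ℝ) := Nat.cast_nonneg N
    have e1 : H (t + T) - H T - H t = (H (t + T) - H t) - H T := by ring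
    by_cases h2t : 2 ≤ t
    · have h1 := hbig t h2t T ⟨hT0, hTθ⟩
      rw [e1]
      calc |(H (t + T) - H t) - H T| ≤ |H (t + T) - H t| + |H T| := abs_sub _ _
        _ ≤ (4 * (n:ℝ) * (N:ℝ)) * t + B := add_le_add h1 hBT
        _ ≤ K₁ * t := by rw [hK₁_def]; nlinarith
    · push_neg at h2t
      have hT1 : T ≤ 1 := hTθ.trans hθ.2
      have h1 : |H (t + T)| ≤ B3 := by
        have := hB3 (t + T) ⟨by linarith, by linarith⟩
        rwa [Real.norm_eq_abs] at this
      have h2 : |H t| ≤ B3 := by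
        have := hB3 t ⟨by linarith, by linarith⟩
        rwa [Real.norm_eq_abs] at this
      calc |H (t + T) - H T - H t|
          ≤ |H (t + T) - H T| + |H t| := abs_sub _ _
        _ ≤ (|H (t + T)| + |H T|) + |H t| := add_le_add (abs_sub _ _) le_rfl
        _ ≤ K₁ * 1 := by rw [hK₁_def]; nlinarith
        _ ≤ K₁ * t := mul_le_mul_of_nonneg_left ht hK₁0
  have hLb : ∀ T ∈ Set.Icc (0:ℝ) θ, |L T| ≤ K₁ := by
    rintro T ⟨hT0, hTθ⟩
    rcases eq_or_lt_of_le hT0 with rfl | hT0'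
    · rw [hL0]; simpa using hK₁0
    · have h1 : Tendsto (fun t => |(1/t) * (H (t+T) - H T - H t)|) atTop (𝓝 |L T|) :=
        (htend T hT0' hTθ).abs
      apply le_of_tendsto h1
      filter_upwards [eventually_ge_atTop (1:ℝ)] with t ht
      have htpos : (0:ℝ) < t := lt_of_lt_of_le one_pos ht
      rw [abs_mul, abs_of_pos (by positivity : (0:ℝ) < 1/t)]
      calc (1/t) * |H (t+T) - H T - H t| ≤ (1/t) * (K₁ * t) := by
            apply mul_le_mul_of_nonneg_left (hG t ht T ⟨hT0'.le, hTθ⟩)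
            positivity
        _ = K₁ := by field_simp
  refine ⟨2 * K₁, fun t ht T hT => ?_⟩
  have htpos : (0:ℝ) < t := lt_of_lt_of_le one_pos ht
  rw [key t (by linarith) T hT.1]
  calc |(1/t) * (H (t + T) - H T - H t) - L T|
      ≤ |(1/t) * (H (t + T) - H T - H t)| + |L T| := abs_sub _ _
    _ ≤ K₁ + K₁ := by
        apply add_le_add _ (hLb T hT)
        rw [abs_mul, abs_of_pos (by positivity : (0:ℝ) < 1/t)]
        calc (1/t) * |H (t + T) - H T - H t| ≤ (1/t) * (K₁ * t) := by
              apply mul_le_mul_of_nonneg_left (hG t ht T hT)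
              positivity
          _ = K₁ := by field_simp
    _ = 2 * K₁ := by ring
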